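/- Every twisted identity w ∈ ι(θ) can be written as w = x·θ(x⁻¹) for some x ∈ W with ℓ(w) = 2ℓ(x), where ℓ denotes the Coxeter length function. -/

import Mathlib

open List

namespace TwistedAux

variable {B : Type*} {W : Type*} [Group W] {M : CoxeterMatrix B} (cs : CoxeterSystem M W)

local prefix:100 "s" => cs.simple
local prefix:100 "π" => cs.wordProd
local prefix:100 "ℓ" => cs.length

open scoped Classical

/-- One step of the reflection cocycle action. -/
noncomputable def tf (i : B) : (W × ZMod 2) → (W × ZMod 2) :=
  fun p => (s i * p.1 * s i, p.2 + if p.1 = s i then 1 else 0)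

lemma zmod2_add_self : ∀ x : ZMod 2, x + x = 0 := by decide

lemma tf_invol (i : B) : Function.Involutive (tf cs i) := by
  intro p
  simp only [tf]
  have h1 : s i * (s i * p.1 * s i) * s i = p.1 := by
    group
    simp [cs.simple_sq]
  have h2 : (s i * p.1 * s i = s i) ↔ (p.1 = s i) := by
    constructor
    · intro h
      have := congrArg (fun z => s i * z * s i) h
      simpa [mul_assoc, cs.simple_mul_simple_cancel_left, cs.simple_mul_simple_cancel_right]
        using this
    · intro h; rw [h]; simp [mul_assoc, cs.simple_mul_simple_self]
  rw [h1]
  ext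
  · rfl
  · simp only [h2]
    rcases em (p.1 = s i) with h | h <;> simp [h, add_assoc, zmod2_add_self]

/-- The permutation version. -/
noncomputable def tp (i : B) : Equiv.Perm (W × ZMod 2) := (tf_invol cs i).toPerm

lemma tp_apply (i : B) (p : W × ZMod 2) : tp cs i p = tf cs i p := rfl

/-- mod-2 count of occurrences in a list. -/
noncomputable def zc (t : W) : List W → ZMod 2
  | [] => 0
  | x :: l => (if x = t then 1 else 0) + zc t l

lemma zc_append (t : W) (l1 l2 : List W) : zc t (l1 ++ l2) = zc t l1 + zc t l2 := by
  induction l1 with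
  | nil => simp [zc]
  | cons x l ih => simp [zc, ih, add_assoc]

lemma zc_self_append (t : W) (l : List W) : zc t (l ++ l) = 0 := by
  rw [zc_append]; exact zmod2_add_self _

lemma mem_of_zc_ne_zero {t : W} {l : List W} (h : zc t l ≠ 0) : t ∈ l := by
  induction l with
  | nil => simp [zc] at h
  | cons x l ih =>
      rcases em (x = t) with hx | hx
      · simp [hx]
      · simp only [zc, hx, if_false, zero_add] at h
        exact List.mem_cons_of_mem _ (ih h)

/-- The action of a word under the cocycle permutations. -/
lemma prod_tp_word (ω : List B) (p : W × ZMod 2) :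
    ((ω.map (tp cs)).prod : Equiv.Perm (W × ZMod 2)) p
      = (π ω * p.1 * (π ω)⁻¹, p.2 + zc p.1 (cs.rightInvSeq ω)) := by
  induction ω generalizing p with
  | nil => simp [CoxeterSystem.rightInvSeq, zc]
  | cons i ω ih =>
      have : ((List.map (tp cs) (i :: ω)).prod : Equiv.Perm (W × ZMod 2)) p
          = tp cs i (((ω.map (tp cs)).prod : Equiv.Perm (W × ZMod 2)) p) := by
        simp [List.map_cons, List.prod_cons]
      rw [this, ih, tp_apply, tf]
      have hris : cs.rightInvSeq (i :: ω) = ((π ω)⁻¹ * s i * π ω) :: cs.rightInvSeq ω := rfl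
      have hcond : (π ω * p.1 * (π ω)⁻¹ = s i) ↔ ((π ω)⁻¹ * s i * π ω = p.1) := by
        constructor
        · intro h
          rw [← h]; group
        · intro h
          rw [← h]; group
      ext
      · simp only [cs.wordProd_cons, mul_inv_rev, cs.inv_simple]
        group
      · simp only [hris, zc, hcond]
        rcases em ((π ω)⁻¹ * s i * π ω = p.1) with h | h <;> simp [h] <;> ring


/-! ### The braid relation for the cocycle action -/

section Braid

variable (i j : B)

/-- `ρ L` is the `L`-th reflection of the infinite alternating inversion sequence. -/
noncomputable def rho (L : ℕ) : W :=
  (π (CoxeterSystem.alternatingWord i j L))⁻¹ * π (CoxeterSystem.alternatingWord i j (L + 1))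

lemma simple_mul_zpow (n : ℤ) :
    s j * (s i * s j) ^ n = (s i * s j) ^ (-n) * s j := by
  have h : s j * (s i * s j) * (s j)⁻¹ = (s i * s j)⁻¹ := by
    calc s j * (s i * s j) * (s j)⁻¹ = s j * s i * (s j * (s j)⁻¹) := by group
      _ = s j * s i := by simp
      _ = (s i * s j)⁻¹ := by rw [mul_inv_rev, cs.inv_simple, cs.inv_simple]
  calc s j * (s i * s j) ^ n = (s j * (s i * s j) * (s j)⁻¹) ^ n * s j := by
        rw [conj_zpow]; group
    _ = ((s i * s j)⁻¹) ^ n * s j := by rw [h]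
    _ = (s i * s j) ^ (-n) * s j := by rw [inv_zpow, zpow_neg]

lemma rho_eq (L : ℕ) : rho cs i j L = (s i * s j) ^ (-(L : ℤ)) * s j := by
  have hA : ∀ K : ℕ, π (CoxeterSystem.alternatingWord i j K)
      = (if Even K then 1 else s j) * (s i * s j) ^ ((K / 2 : ℕ) : ℤ) := by
    intro K
    rw [cs.prod_alternatingWord_eq_mul_pow i j K, zpow_natCast]
  rcases Nat.even_or_odd L with he | ho
  · obtain ⟨k, hk⟩ := he
    have h1 : L / 2 = k := by omega
    have h2 : (L + 1) / 2 = k := by omega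
    have h3 : ¬ Even (L + 1) := by simp [Nat.even_add_one]; exact ⟨k, hk⟩
    rw [rho, hA L, hA (L+1), if_pos ⟨k, hk⟩, if_neg h3, h1, h2, one_mul, ← zpow_neg,
      simple_mul_zpow cs i j, ← mul_assoc, ← zpow_add]
    have he : (-(k:ℤ) + -(k:ℤ)) = -(L:ℤ) := by omega
    rw [he]
  · obtain ⟨k, hk⟩ := ho
    have h1 : L / 2 = k := by omega
    have h2 : (L + 1) / 2 = k + 1 := by omega
    have h3 : Even (L + 1) := ⟨k+1, by omega⟩
    have h4 : ¬ Even L := by rw [Nat.even_iff]; omega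
    rw [rho, hA L, hA (L+1), if_neg h4, if_pos h3, h1, h2, one_mul, mul_inv_rev, cs.inv_simple,
      ← zpow_neg, mul_assoc, simple_mul_zpow cs i j, ← mul_assoc, ← zpow_add]
    have he : (-(k:ℤ) + -((k+1 : ℕ):ℤ)) = -(L:ℤ) := by push_cast; omega
    rw [he]

lemma rho_periodic (L : ℕ) : rho cs i j (L + M i j) = rho cs i j L := by
  rw [rho_eq, rho_eq]
  congr 1
  have h2 : (s i * s j) ^ (-(M i j : ℤ)) = 1 := by
    rw [zpow_neg, zpow_natCast, cs.simple_mul_simple_pow, inv_one]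
  have h1 : (-(↑(L + M i j)) : ℤ) = -(L:ℤ) + -(M i j : ℤ) := by push_cast; ring
  rw [h1, zpow_add, h2, mul_one]

/-- The inversion-sequence list of the alternating word. -/
lemma ris_alternating : ∀ n : ℕ,
    cs.rightInvSeq (CoxeterSystem.alternatingWord i j n)
      = ((List.range n).reverse).map (rho cs i j) := by
  intro n
  induction n with
  | zero => simp [CoxeterSystem.alternatingWord]
  | succ n ih =>
      rw [CoxeterSystem.alternatingWord_succ' i j n]
      have hris : ∀ (c : B) (ω : List B), cs.rightInvSeq (c :: ω)
          = ((π ω)⁻¹ * s c * π ω) :: cs.rightInvSeq ω := fun c ω => rfl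
      rw [hris, ih, List.range_succ, List.reverse_append]
      simp only [List.reverse_singleton, List.singleton_append, List.map_cons]
      congr 1
      rw [rho, CoxeterSystem.alternatingWord_succ' i j n, cs.wordProd_cons]
      group

end Braid


/-! ### The lifted cocycle -/

lemma alt_two_mul_succ (i j : B) (m : ℕ) :
    CoxeterSystem.alternatingWord i j (2*(m+1)) = i :: j :: CoxeterSystem.alternatingWord i j (2*m) := by
  have h1 : 2*(m+1) = (2*m+1) + 1 := by ring
  rw [h1, CoxeterSystem.alternatingWord_succ' i j (2*m+1),
    CoxeterSystem.alternatingWord_succ' i j (2*m)]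
  have h2 : ¬ Even (2*m+1) := by simp [Nat.even_add_one]
  have h3 : Even (2*m) := ⟨m, by ring⟩
  rw [if_neg h2, if_pos h3]

lemma pow_eq_prod_alternating (i j : B) (m : ℕ) :
    (tp cs i * tp cs j) ^ m = (List.map (tp cs) (CoxeterSystem.alternatingWord i j (2*m))).prod := by
  induction m with
  | zero => simp [CoxeterSystem.alternatingWord]
  | succ m ih =>
      rw [alt_two_mul_succ, List.map_cons, List.map_cons, List.prod_cons, List.prod_cons,
        ← ih, pow_succ']
      rw [← mul_assoc]

lemma map_rho_range_add (i j : B) : ∀ n : ℕ,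
    ((List.range (n + M i j)).reverse).map (rho cs i j)
      = ((List.range n).reverse).map (rho cs i j)
        ++ ((List.range (M i j)).reverse).map (rho cs i j) := by
  intro n
  induction n with
  | zero => simp
  | succ n ih =>
      have h1 : n + 1 + M i j = (n + M i j) + 1 := by ring
      rw [h1, List.range_succ, List.range_succ, List.reverse_append, List.reverse_append]
      simp only [List.reverse_singleton, List.singleton_append, List.map_cons]
      rw [ih, rho_periodic]
      rfl

lemma tp_liftable : CoxeterMatrix.IsLiftable M (tp cs) := by
  intro i j
  rcases Nat.eq_zero_or_pos (M i j) with h0 | hpos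
  · rw [h0, pow_zero]
  · apply Equiv.ext
    intro p
    rw [pow_eq_prod_alternating, prod_tp_word]
    have hπ : π (CoxeterSystem.alternatingWord i j (2 * M i j)) = 1 := by
      rw [cs.prod_alternatingWord_eq_mul_pow]
      have he : Even (2 * M i j) := ⟨M i j, by ring⟩
      have hd : 2 * M i j / 2 = M i j := by omega
      rw [if_pos he, hd, one_mul, cs.simple_mul_simple_pow]
    have hz : zc p.1 (cs.rightInvSeq (CoxeterSystem.alternatingWord i j (2 * M i j))) = 0 := by
      rw [ris_alternating]
      have h2 : 2 * M i j = M i j + M i j := by ring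
      rw [h2, map_rho_range_add]
      exact zc_self_append _ _
    rw [hπ, hz]
    simp

/-- The reflection cocycle homomorphism. -/
noncomputable def phi : W →* Equiv.Perm (W × ZMod 2) := cs.lift ⟨tp cs, tp_liftable cs⟩

lemma phi_simple (i : B) : phi cs (s i) = tp cs i := cs.lift_apply_simple (tp_liftable cs) i

lemma phi_wordProd (ω : List B) : phi cs (π ω) = (ω.map (tp cs)).prod := by
  induction ω with
  | nil => simp [cs.wordProd_nil]
  | cons i ω ih => rw [cs.wordProd_cons, map_mul, ih, List.map_cons, List.prod_cons, phi_simple]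

/-- The cocycle: `eta w t` records whether `t` "inverts" along `w` on the right. -/
noncomputable def eta (w t : W) : ZMod 2 := (phi cs w (t, 0)).2

lemma eta_wordProd (ω : List B) (t : W) : eta cs (π ω) t = zc t (cs.rightInvSeq ω) := by
  rw [eta, phi_wordProd, prod_tp_word]
  simp

lemma phi_apply (w t : W) (ε : ZMod 2) : phi cs w (t, ε) = (w * t * w⁻¹, ε + eta cs w t) := by
  obtain ⟨ω, hω⟩ := cs.wordProd_surjective w
  subst hω
  rw [phi_wordProd, prod_tp_word, eta_wordProd]

lemma eta_one (t : W) : eta cs 1 t = 0 := by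
  rw [eta, map_one]
  rfl

lemma eta_mul (a b t : W) : eta cs (a * b) t = eta cs b t + eta cs a (b * t * b⁻¹) := by
  have h : phi cs (a * b) (t, 0) = phi cs a (phi cs b (t, 0)) := by
    rw [map_mul]; rfl
  rw [phi_apply, phi_apply, phi_apply] at h
  have := congrArg Prod.snd h
  simpa using this

lemma eta_inv_rel (u t : W) : eta cs u⁻¹ (u * t * u⁻¹) = eta cs u t := by
  have h := eta_mul cs u⁻¹ u t
  rw [inv_mul_cancel, eta_one] at h
  have hc : ∀ x y : ZMod 2, 0 = x + y → y = x := by decide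
  exact hc _ _ h

lemma eta_simple_self (i : B) : eta cs (s i) (s i) = 1 := by
  rw [eta, phi_simple, tp_apply, tf]
  simp

lemma eta_refl_self {t : W} (ht : cs.IsReflection t) : eta cs t t = 1 := by
  obtain ⟨u, i, rfl⟩ := ht
  set t := u * s i * u⁻¹ with hdef
  have h1 : t = u * (s i * u⁻¹) := by rw [hdef]; group
  have h2 : (s i * u⁻¹) * t * (s i * u⁻¹)⁻¹ = s i := by
    rw [hdef, mul_inv_rev, inv_inv, cs.inv_simple]
    group
    simp [cs.simple_sq, mul_assoc]
  have h3 : u⁻¹ * t * (u⁻¹)⁻¹ = s i := by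
    rw [hdef]; group
  have h4 : eta cs (s i * u⁻¹) t = eta cs u⁻¹ t + 1 := by
    rw [eta_mul cs (s i) u⁻¹ t, h3, eta_simple_self]
  have h5 : eta cs u⁻¹ t = eta cs u (s i) := by
    have := eta_inv_rel cs u (s i)
    rw [← hdef] at this
    exact this
  calc eta cs t t = eta cs (u * (s i * u⁻¹)) t := by rw [← h1]
    _ = eta cs (s i * u⁻¹) t + eta cs u ((s i * u⁻¹) * t * (s i * u⁻¹)⁻¹) := eta_mul cs _ _ _
    _ = (eta cs u⁻¹ t + 1) + eta cs u (s i) := by rw [h4, h2]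
    _ = (eta cs u (s i) + eta cs u (s i)) + 1 := by rw [h5]; ring
    _ = 1 := by rw [zmod2_add_self]; ring

lemma length_lt_of_eta_eq_one {w t : W} (h : eta cs w t = 1) : ℓ (w * t) < ℓ w := by
  obtain ⟨ω, hred, hω⟩ := cs.exists_reduced_word' w
  subst hω
  rw [eta_wordProd] at h
  have hmem : t ∈ cs.rightInvSeq ω := mem_of_zc_ne_zero (by rw [h]; decide)
  exact (cs.isRightInversion_of_mem_rightInvSeq hred hmem).2

lemma zmod2_cases : ∀ x : ZMod 2, x = 0 ∨ x = 1 := by decide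

lemma eta_eq_one_iff {w t : W} (ht : cs.IsReflection t) :
    eta cs w t = 1 ↔ ℓ (w * t) < ℓ w := by
  constructor
  · exact length_lt_of_eta_eq_one cs
  · intro h
    rcases zmod2_cases (eta cs w t) with h0 | h1
    · exfalso
      have hmul : eta cs (w * t) t = 1 := by
        rw [eta_mul cs w t t]
        have htt : t * t * t⁻¹ = t := by rw [ht.mul_self, one_mul, ht.inv]
        rw [htt, eta_refl_self cs ht, h0, add_zero]
      have := length_lt_of_eta_eq_one cs hmul
      rw [mul_assoc, ht.mul_self, mul_one] at this
      omega
    · exact h1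


/-! ### Automorphisms preserving the simple system -/

section Theta

variable (θ : W ≃* W)

lemma length_theta_le (hθS : ∀ i : B, ∃ j : B, θ (s i) = s j) (u : W) : ℓ (θ u) ≤ ℓ u := by
  obtain ⟨ω, hlen, hω⟩ := cs.exists_reduced_word u
  choose σ hσ using hθS
  have hword : ∀ ω' : List B, θ (π ω') = π (ω'.map σ) := by
    intro ω'
    induction ω' with
    | nil => simp
    | cons c l ih => rw [cs.wordProd_cons, map_mul, hσ, ih, List.map_cons, cs.wordProd_cons]
  calc ℓ (θ u) = ℓ (π (ω.map σ)) := by rw [hω, hword]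
    _ ≤ (ω.map σ).length := cs.length_wordProd_le _
    _ = ω.length := List.length_map _
    _ = ℓ u := by subst hω; exact Eq.symm hlen

lemma length_theta (hθ2 : ∀ w : W, θ (θ w) = w) (hθS : ∀ i : B, ∃ j : B, θ (s i) = s j)
    (u : W) : ℓ (θ u) = ℓ u := by
  refine le_antisymm (length_theta_le cs θ hθS u) ?_
  have := length_theta_le cs θ hθS (θ u)
  rwa [hθ2] at this

lemma refl_theta (hθS : ∀ i : B, ∃ j : B, θ (s i) = s j) {t : W} (ht : cs.IsReflection t) :
    cs.IsReflection (θ t) := by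
  obtain ⟨u, i, rfl⟩ := ht
  obtain ⟨j, hj⟩ := hθS i
  exact ⟨θ u, j, by rw [map_mul, map_mul, map_inv, hj]⟩

lemma eta_theta (hθ2 : ∀ w : W, θ (θ w) = w) (hθS : ∀ i : B, ∃ j : B, θ (s i) = s j)
    {t : W} (ht : cs.IsReflection t) (u : W) : eta cs (θ u) (θ t) = eta cs u t := by
  have key : eta cs u t = 1 → eta cs (θ u) (θ t) = 1 := by
    intro h
    refine (eta_eq_one_iff cs (refl_theta cs θ hθS ht)).mpr ?_
    rw [← map_mul, length_theta cs θ hθ2 hθS, length_theta cs θ hθ2 hθS]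
    exact (eta_eq_one_iff cs ht).mp h
  have key2 : eta cs (θ u) (θ t) = 1 → eta cs u t = 1 := by
    intro h
    refine (eta_eq_one_iff cs ht).mpr ?_
    have := (eta_eq_one_iff cs (refl_theta cs θ hθS ht)).mp h
    rwa [← map_mul, length_theta cs θ hθ2 hθS, length_theta cs θ hθ2 hθS] at this
  rcases zmod2_cases (eta cs (θ u) (θ t)) with h' | h'
  · rcases zmod2_cases (eta cs u t) with h | h
    · rw [h, h']
    · rw [key h] at h'
      exact absurd h' one_ne_zero
  · rw [h', key2 h']

end Theta

end TwistedAux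


/-- The set of twisted identities `ι(θ) = {w·θ(w⁻¹) : w ∈ W}`. -/
def twistedIdentities {W : Type*} [Group W] (θ : W ≃* W) : Set W :=
  {w : W | ∃ x : W, w = x * θ x⁻¹}

/-- Every twisted identity `w ∈ ι(θ)` can be written as `w = x·θ(x⁻¹)` with
`ℓ(w) = 2·ℓ(x)`. -/
theorem stmt_1 {B W : Type*} [Group W] {M : CoxeterMatrix B}
    (cs : CoxeterSystem M W) (θ : W ≃* W)
    (hθ2 : ∀ w : W, θ (θ w) = w)
    (hθS : ∀ i : B, ∃ j : B, θ (cs.simple i) = cs.simple j)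
    (w : W) (hw : w ∈ twistedIdentities θ) :
    ∃ x : W, w = x * θ x⁻¹ ∧ cs.length w = 2 * cs.length x := by
  classical
  open TwistedAux in
  suffices H : ∀ n : ℕ, ∀ w : W, cs.length w = n → (∃ x : W, w = x * θ x⁻¹) →
      ∃ x : W, w = x * θ x⁻¹ ∧ cs.length w = 2 * cs.length x by
    exact H (cs.length w) w rfl hw
  intro n
  induction n using Nat.strong_induction_on with
  | _ n ih =>
  rintro w hn ⟨x₀, hx₀⟩
  by_cases hw1 : w = 1
  · exact ⟨1, by simp [hw1], by simp [hw1]⟩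
  -- notation
  have hθw : θ w = w⁻¹ := by
    rw [hx₀]
    rw [map_mul, map_inv, map_inv, hθ2, mul_inv_rev, inv_inv]
  have hLθ : ∀ u : W, cs.length (θ u) = cs.length u :=
    fun u => length_theta cs θ hθ2 hθS u
  obtain ⟨i, hdesc⟩ := cs.exists_leftDescent_of_ne_one hw1
  obtain ⟨j, hj⟩ := hθS i
  have hθsj : θ (cs.simple j) = cs.simple i := by rw [← hj, hθ2]
  have hsw : cs.length (cs.simple i * w) + 1 = cs.length w := (cs.isLeftDescent_iff).mp hdesc
  have htrick : cs.length (w * cs.simple j) = cs.length (cs.simple i * w) := by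
    calc cs.length (w * cs.simple j) = cs.length (θ (w * cs.simple j)) := (hLθ _).symm
      _ = cs.length (w⁻¹ * cs.simple i) := by rw [map_mul, hθw, hθsj]
      _ = cs.length ((w⁻¹ * cs.simple i)⁻¹) := (cs.length_inv _).symm
      _ = cs.length (cs.simple i * w) := by rw [mul_inv_rev, inv_inv, cs.inv_simple]
  have hswj : eta cs w (cs.simple j) = 1 := by
    refine (eta_eq_one_iff cs (cs.isReflection_simple j)).mpr ?_
    rw [htrick]
    exact hdesc
  -- absorbing case is impossible
  have hab : w * cs.simple j * w⁻¹ ≠ cs.simple i := by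
    intro habs
    set r : W := x₀⁻¹ * cs.simple i * x₀ with hrdef
    have hr : cs.IsReflection r := by
      have := (cs.isReflection_simple i).conj x₀⁻¹
      rwa [inv_inv] at this
    have hwtheta : w * θ x₀ = x₀ := by
      rw [hx₀, mul_assoc, ← map_mul, inv_mul_cancel, map_one, mul_one]
    have hθr : θ r = r := by
      have hsj : cs.simple j = w⁻¹ * cs.simple i * w := by
        rw [← habs]; group
      rw [hrdef, map_mul, map_mul, map_inv, hj, hsj]
      have h1 : (θ x₀)⁻¹ * w⁻¹ = x₀⁻¹ := by
        rw [← mul_inv_rev, hwtheta]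
      calc (θ x₀)⁻¹ * (w⁻¹ * cs.simple i * w) * θ x₀
          = ((θ x₀)⁻¹ * w⁻¹) * cs.simple i * (w * θ x₀) := by group
        _ = x₀⁻¹ * cs.simple i * x₀ := by rw [h1, hwtheta]
    have h1 : eta cs w⁻¹ (cs.simple i) = 1 := by
      refine (eta_eq_one_iff cs (cs.isReflection_simple i)).mpr ?_
      have e1 : cs.length (w⁻¹ * cs.simple i) = cs.length (cs.simple i * w) := by
        rw [← cs.length_inv, mul_inv_rev, inv_inv, cs.inv_simple]
      rw [e1, cs.length_inv]
      exact hdesc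
    have hwinv : w⁻¹ = θ x₀ * x₀⁻¹ := by
      rw [← hθw, hx₀, map_mul, map_inv, map_inv, hθ2]
    have hsir : cs.simple i = x₀ * r * x₀⁻¹ := by rw [hrdef]; group
    have e2 : eta cs x₀⁻¹ (cs.simple i) = eta cs x₀ r := by
      rw [hsir]
      exact eta_inv_rel cs x₀ r
    have e3 : eta cs (θ x₀) r = eta cs x₀ r := by
      conv_lhs => rw [← hθr]
      exact eta_theta cs θ hθ2 hθS hr x₀
    have e4 : eta cs w⁻¹ (cs.simple i) = 0 := by
      rw [hwinv, eta_mul cs (θ x₀) x₀⁻¹ (cs.simple i), inv_inv, ← hrdef, e2, e3,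
        zmod2_add_self]
    rw [h1] at e4
    exact one_ne_zero e4
  have h2 : eta cs (cs.simple i) (w * cs.simple j * w⁻¹) = 0 := by
    rcases zmod2_cases (eta cs (cs.simple i) (w * cs.simple j * w⁻¹)) with h | h
    · exact h
    · exfalso
      have hlt := length_lt_of_eta_eq_one cs h
      rw [cs.length_simple] at hlt
      have hz : cs.length (cs.simple i * (w * cs.simple j * w⁻¹)) = 0 := by omega
      have h6 := (cs.length_eq_zero_iff).mp hz
      apply hab
      rw [eq_inv_of_mul_eq_one_right h6, cs.inv_simple]
  have h3 : eta cs (cs.simple i * w) (cs.simple j) = 1 := by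
    rw [eta_mul cs (cs.simple i) w (cs.simple j), hswj, h2, add_zero]
  have h4 : cs.length (cs.simple i * w * cs.simple j) < cs.length (cs.simple i * w) := by
    exact length_lt_of_eta_eq_one cs h3
  have h5 : cs.length (cs.simple i * w * cs.simple j) + 1 = cs.length (cs.simple i * w) :=
    (cs.isRightDescent_iff).mp h4
  -- the descended twisted identity
  have hx' : cs.simple i * w * cs.simple j = (cs.simple i * x₀) * θ ((cs.simple i * x₀)⁻¹) := by
    rw [mul_inv_rev, cs.inv_simple, map_mul, hj, hx₀]
    group
  obtain ⟨x', hx'eq, hx'len⟩ := ih (cs.length (cs.simple i * w * cs.simple j))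
    (by omega) (cs.simple i * w * cs.simple j) rfl ⟨cs.simple i * x₀, hx'⟩
  refine ⟨cs.simple i * x', ?_, ?_⟩
  · have hw' : w = cs.simple i * (cs.simple i * w * cs.simple j) * cs.simple j := by
      have hgr : cs.simple i * (cs.simple i * w * cs.simple j) * cs.simple j
          = (cs.simple i * cs.simple i) * w * (cs.simple j * cs.simple j) := by group
      rw [hgr, cs.simple_mul_simple_self, cs.simple_mul_simple_self, one_mul, mul_one]
    rw [hw', hx'eq, mul_inv_rev, cs.inv_simple, map_mul, hj]
    group
  · rcases cs.length_simple_mul x' i with hc | hc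
    · omega
    · exfalso
      have hle : cs.length ((cs.simple i * x') * θ ((cs.simple i * x')⁻¹))
          ≤ cs.length (cs.simple i * x') + cs.length (θ ((cs.simple i * x')⁻¹)) :=
        cs.length_mul_le _ _
      rw [hLθ, cs.length_inv] at hle
      have hw' : w = cs.simple i * (cs.simple i * w * cs.simple j) * cs.simple j := by
        have hgr : cs.simple i * (cs.simple i * w * cs.simple j) * cs.simple j
            = (cs.simple i * cs.simple i) * w * (cs.simple j * cs.simple j) := by group
        rw [hgr, cs.simple_mul_simple_self, cs.simple_mul_simple_self, one_mul, mul_one]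
      have hweq : w = (cs.simple i * x') * θ ((cs.simple i * x')⁻¹) := by
        rw [hw', hx'eq, mul_inv_rev, cs.inv_simple, map_mul, hj]
        group
      rw [← hweq] at hle
      omega
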